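/- The set of all ratios o(G)/o(H), where G ranges over all finite groups and H ranges over all subgroups of G, is dense in the interval [0, ∞). That is, for every real number a ≥ 0 and every ε > 0, there exist a finite group G and a subgroup H of G such that |o(G)/o(H) - a| < ε. -/

import Mathlib

open Filter Topology

/-- The average order of the elements of a finite group `G`:
`o(G) = (1/|G|) * ∑_{x ∈ G} |x|`. -/
noncomputable def avgOrder (G : Type*) [Group G] : ℝ :=
  (∑ᶠ x : G, (orderOf x : ℝ)) / (Nat.card G)

namespace AvgDense

open Finset


def W (n : ℕ) : ℕ := ∑ d ∈ n.divisors, d * d.totient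

lemma sum_orderOf (α : Type*) [Group α] [Fintype α] [IsCyclic α] :
    ∑ x : α, orderOf x = W (Fintype.card α) := by
  classical
  have h : ∀ x : α, x ∈ Finset.univ → orderOf x ∈ (Fintype.card α).divisors := fun x _ =>
    Nat.mem_divisors.mpr ⟨orderOf_dvd_card, Fintype.card_ne_zero⟩
  rw [← Finset.sum_fiberwise_of_maps_to h (fun x => orderOf x)]
  refine Finset.sum_congr rfl fun d hd => ?_
  have h2 : ∀ x ∈ Finset.univ.filter (fun x : α => orderOf x = d), orderOf x = d :=
    fun x hx => (Finset.mem_filter.mp hx).2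
  rw [Finset.sum_congr rfl h2, Finset.sum_const, smul_eq_mul,
    IsCyclic.card_orderOf_eq_totient (Nat.mem_divisors.mp hd).1, mul_comm]

lemma avgOrder_eq (G : Type*) [Group G] [Fintype G] :
    avgOrder G = (∑ x : G, (orderOf x : ℝ)) / (Fintype.card G) := by
  rw [avgOrder, finsum_eq_sum_of_fintype, Nat.card_eq_fintype_card]

lemma avgOrder_congr {G H : Type*} [Group G] [Group H] [Finite G] (e : G ≃* H) :
    avgOrder G = avgOrder H := by
  have : Fintype G := Fintype.ofFinite G
  have : Fintype H := Fintype.ofEquiv G e.toEquiv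
  rw [avgOrder_eq, avgOrder_eq, Fintype.card_congr e.toEquiv,
    Fintype.sum_equiv e.toEquiv (fun x => (orderOf x : ℝ)) (fun y => (orderOf y : ℝ))
      (fun x => by exact_mod_cast (congrArg Nat.cast (e.orderOf_eq x)).symm)]

lemma avgOrder_cyclic (α : Type*) [Group α] [Finite α] [IsCyclic α] :
    avgOrder α = (W (Nat.card α) : ℝ) / (Nat.card α) := by
  have : Fintype α := Fintype.ofFinite α
  rw [avgOrder_eq, Nat.card_eq_fintype_card, ← sum_orderOf, Nat.cast_sum]

lemma avgOrder_prod (G H : Type*) [Group G] [Group H] [Finite G] [Finite H]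
    (h : Nat.Coprime (Nat.card G) (Nat.card H)) :
    avgOrder (G × H) = avgOrder G * avgOrder H := by
  have : Fintype G := Fintype.ofFinite G
  have : Fintype H := Fintype.ofFinite H
  rw [avgOrder_eq, avgOrder_eq, avgOrder_eq]
  have key : ∀ x : G × H, (orderOf x : ℝ) = (orderOf x.1 : ℝ) * (orderOf x.2 : ℝ) := by
    intro x
    have hc : Nat.Coprime (orderOf x.1) (orderOf x.2) :=
      Nat.Coprime.coprime_dvd_left (orderOf_dvd_natCard x.1)
        (Nat.Coprime.coprime_dvd_right (orderOf_dvd_natCard x.2) h)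
    rw [Prod.orderOf, Nat.Coprime.lcm_eq_mul hc]
    push_cast; ring
  rw [Finset.sum_congr rfl (fun x _ => key x), Fintype.sum_prod_type, Fintype.card_prod]
  dsimp only
  rw [div_mul_div_comm, ← Finset.sum_mul_sum]
  push_cast
  ring

lemma W_one : W 1 = 1 := by simp [W]

lemma W_prime {p : ℕ} (hp : p.Prime) : W p = 1 + p * (p - 1) := by
  rw [W, Nat.Prime.divisors hp, Finset.sum_insert (by simp [hp.one_lt.ne]), Finset.sum_singleton]
  simp [Nat.totient_prime hp]

lemma W_prime_pow_real {p : ℕ} (hp : p.Prime) (m : ℕ) :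
    ((p : ℝ) + 1) * (W (p ^ m) : ℝ) = (p : ℝ) ^ (2 * m + 1) + 1 := by
  induction m with
  | zero => simp [W_one]
  | succ m ih =>
    have hstep : W (p ^ (m + 1)) = W (p ^ m) + p ^ (m + 1) * (p ^ (m + 1)).totient := by
      rw [W, W, Nat.sum_divisors_prime_pow hp, Nat.sum_divisors_prime_pow hp,
        Finset.sum_range_succ]
    rw [hstep, Nat.totient_prime_pow hp (Nat.succ_pos m)]
    rw [Nat.succ_sub_one]
    push_cast [Nat.cast_sub hp.one_le]
    linear_combination ih


lemma exists_cyclic_pair {p e : ℕ} (hp : p.Prime) (he : 0 < e) {ε : ℝ} (hε : 0 < ε) :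
    ∃ (K : Type) (_ : Group K) (_ : Finite K) (L : Subgroup K) (M : ℕ),
      Nat.card K ∣ (p ^ e) ^ M ∧ |avgOrder K / avgOrder L - (p : ℝ) ^ e| < ε := by
  have hp1R : (1 : ℝ) < (p : ℝ) := by exact_mod_cast hp.one_lt
  obtain ⟨k, hk⟩ := pow_unbounded_of_one_lt ((p : ℝ) ^ (2 * e) / ε) hp1R
  set n := p ^ (e * (k + 1)) with hn
  haveI : NeZero n := ⟨pow_ne_zero _ hp.pos.ne'⟩
  set K := Multiplicative (ZMod n) with hK
  haveI : Finite K := Finite.of_equiv (ZMod n) Multiplicative.ofAdd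
  set g : K := Multiplicative.ofAdd ((p ^ e : ℕ) : ZMod n) with hg
  set L : Subgroup K := Subgroup.zpowers g with hL
  have hcardK : Nat.card K = p ^ (e * (k + 1)) := by
    rw [hK, Nat.card_congr Multiplicative.ofAdd.symm, Nat.card_zmod]
  have hdvd1 : p ^ e ∣ n := pow_dvd_pow p (Nat.le_mul_of_pos_right e (Nat.succ_pos k))
  have hcardL : Nat.card L = p ^ (e * k) := by
    rw [hL, Nat.card_zpowers, hg, orderOf_ofAdd_eq_addOrderOf,
      ZMod.addOrderOf_coe _ (NeZero.ne n), Nat.gcd_eq_right hdvd1, hn,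
      Nat.mul_add, Nat.mul_one, pow_add, Nat.mul_div_cancel _ (pow_pos hp.pos e)]
  -- real arithmetic
  set E : ℝ := (p : ℝ) ^ e with hE
  set B : ℝ := (p : ℝ) ^ (2 * (e * k) + 1) with hB
  have hppos : (0 : ℝ) < (p : ℝ) := by positivity
  have hp1ne : ((p : ℝ) + 1) ≠ 0 := by positivity
  have hEpos : (0 : ℝ) < E := by rw [hE]; positivity
  have hE1 : (1 : ℝ) ≤ E := by
    rw [hE]
    calc (1:ℝ) = 1 ^ e := (one_pow e).symm
    _ ≤ (p:ℝ) ^ e := pow_le_pow_left₀ (by norm_num) hp1R.le e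
  have hBpos : (0 : ℝ) < B := by rw [hB]; positivity
  have c1 := W_prime_pow_real hp (e * (k + 1))
  have c2 := W_prime_pow_real hp (e * k)
  have hexp : (p : ℝ) ^ (2 * (e * (k + 1)) + 1) = B * (E * E) := by
    rw [hB, hE, ← pow_add, ← pow_add]
    congr 1
    ring
  have hW1 : (W (p ^ (e * (k + 1))) : ℝ) = (B * (E * E) + 1) / ((p : ℝ) + 1) := by
    rw [eq_div_iff hp1ne]
    linear_combination c1 + hexp
  have hW0 : (W (p ^ (e * k)) : ℝ) = (B + 1) / ((p : ℝ) + 1) := by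
    rw [eq_div_iff hp1ne]
    linear_combination c2
  have hcast1 : ((p ^ (e * (k + 1)) : ℕ) : ℝ) = (p : ℝ) ^ (e * k) * E := by
    push_cast
    rw [hE, ← pow_add, Nat.mul_add, Nat.mul_one]
  have hcast0 : ((p ^ (e * k) : ℕ) : ℝ) = (p : ℝ) ^ (e * k) := by exact_mod_cast rfl
  have hpk : ((p : ℝ) ^ (e * k)) ≠ 0 := by positivity
  have hB1 : B + 1 ≠ 0 := by positivity
  have hr : avgOrder K / avgOrder L = (B * (E * E) + 1) / ((B + 1) * E) := by
    rw [avgOrder_cyclic, avgOrder_cyclic, hcardK, hcardL, hW1, hW0, hcast1, hcast0]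
    field_simp
    try ring
  have hdiff : avgOrder K / avgOrder L - E = (1 - E * E) / ((B + 1) * E) := by
    rw [hr]
    field_simp
    ring
  refine ⟨K, inferInstance, inferInstance, L, k + 1, ?_, ?_⟩
  · rw [hcardK, ← pow_mul]
  · rw [hdiff]
    have hxnonpos : (1 - E * E) / ((B + 1) * E) ≤ 0 :=
      div_nonpos_iff.mpr (Or.inr ⟨by nlinarith, by positivity⟩)
    rw [abs_of_nonpos hxnonpos, show -((1 - E * E) / ((B + 1) * E)) = (E * E - 1) / ((B + 1) * E) from by ring]
    have hBk : (p : ℝ) ^ k ≤ B := by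
      rw [hB]
      apply pow_le_pow_right₀ hp1R.le
      have h1 : k ≤ 2 * (e * k) := by
        calc k = 1 * k := (one_mul k).symm
        _ ≤ (2 * e) * k := Nat.mul_le_mul_right k (by omega)
        _ = 2 * (e * k) := by ring
      omega
    have hEB : E * E < ε * B := by
      have h2 : (p : ℝ) ^ (2 * e) = E * E := by rw [hE, ← pow_add]; congr 1; ring
      have := (div_lt_iff₀ hε).mp (lt_of_lt_of_le hk hBk)
      calc E * E = (p:ℝ) ^ (2*e) := h2.symm
      _ < (p:ℝ) ^ k * ε := by linarith [(div_lt_iff₀ hε).mp hk]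
      _ ≤ B * ε := by nlinarith
      _ = ε * B := by ring
    calc (E * E - 1) / ((B + 1) * E) ≤ (E * E) / B := by
          apply div_le_div₀ (by positivity) (by linarith) hBpos
          nlinarith
    _ < ε := by
        rw [div_lt_iff₀ hBpos]
        linarith

lemma lemQ : ∀ q : ℕ, 0 < q → ∀ ε : ℝ, 0 < ε →
    ∃ (K : Type) (_ : Group K) (_ : Finite K) (L : Subgroup K) (M : ℕ),
      Nat.card K ∣ q ^ M ∧ |avgOrder K / avgOrder L - (q : ℝ)| < ε := by
  intro q
  induction q using Nat.recOnPosPrimePosCoprime with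
  | prime_pow p n hp hn =>
    intro _ ε hε
    obtain ⟨K, i1, i2, L, M, hdvd, hest⟩ :=
      exists_cyclic_pair hp hn hε
    exact ⟨K, i1, i2, L, M, hdvd, by push_cast; exact hest⟩
  | zero => exact fun h => absurd h (lt_irrefl 0)
  | one =>
    intro _ ε hε
    refine ⟨Multiplicative (ZMod 1), inferInstance,
      Finite.of_equiv (ZMod 1) Multiplicative.ofAdd, ⊤, 1, ?_, ?_⟩
    · simp
    · have hc : Nat.card (Multiplicative (ZMod 1)) = 1 := by
        rw [Nat.card_congr Multiplicative.ofAdd.symm, Nat.card_zmod]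
      have h1 : avgOrder (Multiplicative (ZMod 1)) = 1 := by
        rw [avgOrder_cyclic, hc, W_one]; norm_num
      have h2 : avgOrder (⊤ : Subgroup (Multiplicative (ZMod 1))) = 1 := by
        rw [avgOrder_cyclic, Subgroup.card_top, hc, W_one]; norm_num
      rw [h1, h2]
      simpa using hε
  | coprime a b ha hb hab iha ihb =>
    intro _ ε hε
    have ha0 : 0 < a := by omega
    have hb0 : 0 < b := by omega
    have hbp1 : (0:ℝ) < 2 * ((b:ℝ) + 1) := by positivity
    have hap1 : (0:ℝ) < 2 * ((a:ℝ) + 1) := by positivity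
    set εa := min 1 (ε / (2 * ((b:ℝ) + 1))) with hεa
    set εb := min 1 (ε / (2 * ((a:ℝ) + 1))) with hεb
    have hεa0 : 0 < εa := lt_min one_pos (by positivity)
    have hεb0 : 0 < εb := lt_min one_pos (by positivity)
    obtain ⟨Ka, ia1, ia2, La, Ma, hdva, hra⟩ := iha ha0 εa hεa0
    obtain ⟨Kb, ib1, ib2, Lb, Mb, hdvb, hrb⟩ := ihb hb0 εb hεb0
    have hcop : Nat.Coprime (Nat.card Ka) (Nat.card Kb) :=
      Nat.Coprime.coprime_dvd_left hdva
        (Nat.Coprime.coprime_dvd_right hdvb (Nat.Coprime.pow Ma Mb hab))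
    have hcopL : Nat.Coprime (Nat.card La) (Nat.card Lb) :=
      Nat.Coprime.coprime_dvd_left (Subgroup.card_subgroup_dvd_card La)
        (Nat.Coprime.coprime_dvd_right (Subgroup.card_subgroup_dvd_card Lb) hcop)
    refine ⟨Ka × Kb, inferInstance, inferInstance, La.prod Lb, Ma + Mb, ?_, ?_⟩
    · have h1 : Nat.card (Ka × Kb) = Nat.card Ka * Nat.card Kb := Nat.card_prod _ _
      rw [h1]
      calc Nat.card Ka * Nat.card Kb ∣ a ^ Ma * b ^ Mb := mul_dvd_mul hdva hdvb
      _ ∣ (a * b) ^ (Ma + Mb) := by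
          rw [mul_pow]
          exact mul_dvd_mul (pow_dvd_pow a (by omega)) (pow_dvd_pow b (by omega))
    · have hG : avgOrder (Ka × Kb) = avgOrder Ka * avgOrder Kb := avgOrder_prod _ _ hcop
      have hH : avgOrder (La.prod Lb) = avgOrder La * avgOrder Lb := by
        rw [avgOrder_congr (Subgroup.prodEquiv La Lb), avgOrder_prod _ _ hcopL]
      rw [hG, hH, ← div_mul_div_comm]
      set ra := avgOrder Ka / avgOrder La with hra'
      set rb := avgOrder Kb / avgOrder Lb with hrb'
      have f3 : |ra| ≤ (a:ℝ) + 1 := by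
        have : |ra| - (a:ℝ) ≤ |ra - a| := by
          have := abs_sub_abs_le_abs_sub ra (a:ℝ)
          simpa [abs_of_nonneg (show (0:ℝ) ≤ (a:ℝ) by positivity)] using this
        have h4 : |ra - a| < εa := hra
        have h5 : εa ≤ 1 := min_le_left _ _
        linarith
      have habs : |ra * rb - (a:ℝ) * b| ≤ |ra| * |rb - b| + (b:ℝ) * |ra - a| := by
        have hid : ra * rb - (a:ℝ) * b = ra * (rb - b) + (ra - a) * b := by ring
        rw [hid]
        refine (abs_add_le _ _).trans (le_of_eq ?_)
        rw [abs_mul, abs_mul, abs_of_nonneg (show (0:ℝ) ≤ (b:ℝ) by positivity)]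
        ring
      have t1 : |ra| * |rb - b| ≤ ((a:ℝ) + 1) * εb :=
        mul_le_mul f3 hrb.le (abs_nonneg _) (by positivity)
      have t2 : (b:ℝ) * |ra - a| ≤ (b:ℝ) * εa :=
        mul_le_mul_of_nonneg_left hra.le (by positivity)
      have u1 : ((a:ℝ) + 1) * εb ≤ ε / 2 := by
        have h6 : εb ≤ ε / (2 * ((a:ℝ) + 1)) := min_le_right _ _
        have h7 : ((a:ℝ)+1) * (ε / (2 * ((a:ℝ) + 1))) = ε / 2 := by
          field_simp
        calc ((a:ℝ)+1) * εb ≤ ((a:ℝ)+1) * (ε / (2 * ((a:ℝ) + 1))) :=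
              mul_le_mul_of_nonneg_left h6 (by positivity)
        _ = ε / 2 := h7
      have u2 : (b:ℝ) * εa < ε / 2 := by
        have h6 : εa ≤ ε / (2 * ((b:ℝ) + 1)) := min_le_right _ _
        have hD : (0:ℝ) < ε / (2 * ((b:ℝ) + 1)) := by positivity
        have hDe : (ε / (2 * ((b:ℝ) + 1))) * (2 * ((b:ℝ) + 1)) = ε :=
          div_mul_cancel₀ _ (by positivity)
        have h8 : (b:ℝ) * (ε / (2 * ((b:ℝ) + 1))) < ε / 2 := by nlinarith
        calc (b:ℝ) * εa ≤ (b:ℝ) * (ε / (2 * ((b:ℝ) + 1))) :=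
              mul_le_mul_of_nonneg_left h6 (by positivity)
        _ < ε / 2 := h8
      have final : |ra * rb - (a:ℝ) * (b:ℝ)| < ε := habs.trans_lt (by linarith)
      push_cast
      exact final

set_option maxHeartbeats 1000000 in
lemma frob_exists (A : ℕ) (hA : 1 ≤ A) (c δ : ℝ) (hδ : 0 < δ) :
    ∃ (F : Type) (_ : Group F) (_ : Finite F) (R : Subgroup F) (p : ℕ),
      p.Prime ∧ c < (p : ℝ) ∧ Nat.card F = 2 ^ A * p ∧
      ((2:ℝ) ^ A)⁻¹ ≤ avgOrder F / avgOrder R ∧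
      avgOrder F / avgOrder R ≤ 1 ∧
      |avgOrder F / avgOrder R - ((2:ℝ) ^ A)⁻¹| < δ := by
  -- choose the size parameter s
  have hW2ge1 : 1 ≤ W (2 ^ A) := by
    have h1 : (1 : ℕ) ∈ (2 ^ A).divisors :=
      Nat.one_mem_divisors.mpr (pow_ne_zero A two_ne_zero)
    have h2 := Finset.single_le_sum (f := fun d : ℕ => d * d.totient)
      (fun i _ => Nat.zero_le _) h1
    simpa [W, Nat.totient_one] using h2
  have hW2pos : (0:ℝ) < (W (2 ^ A) : ℝ) := by exact_mod_cast Nat.lt_of_lt_of_le Nat.zero_lt_one hW2ge1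
  have hmin : (0:ℝ) < min δ 2⁻¹ := lt_min hδ (by norm_num)
  obtain ⟨k, hk⟩ := pow_unbounded_of_one_lt
    (max c ((W (2 ^ A) : ℝ) / min δ 2⁻¹)) (one_lt_two (α := ℝ))
  set s := max k A with hs
  -- the prime p
  set N := Nat.fermatNumber s with hN
  set p := N.minFac with hpdef
  have hp : p.Prime := Nat.minFac_prime (Nat.fermatNumber_ne_one s)
  have hpdvd : p ∣ N := Nat.minFac_dvd N
  have hp2 : p ≠ 2 := (Nat.odd_fermatNumber s).ne_two_of_dvd_nat hpdvd
  haveI : Fact p.Prime := ⟨hp⟩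
  have hp2lt : 2 < p := lt_of_le_of_ne hp.two_le (Ne.symm hp2)
  haveI : Fact (2 < p) := ⟨hp2lt⟩
  clear_value s N p
  -- order of 2 mod p
  have h2 : (2 : ZMod p) ^ (2 ^ s) = -1 := by
    rw [eq_neg_iff_add_eq_zero]
    have := (ZMod.natCast_eq_zero_iff N p).mpr hpdvd
    rw [hN, Nat.fermatNumber] at this
    exact_mod_cast this
  have horder2 : orderOf (2 : ZMod p) = 2 ^ (s + 1) := by
    apply orderOf_eq_prime_pow
    · rw [h2]; exact ZMod.neg_one_ne_one
    · rw [pow_succ, pow_mul, h2, neg_one_sq]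
  have h2ne : (2 : ZMod p) ≠ 0 := by
    intro h
    rw [h, zero_pow (pow_ne_zero s two_ne_zero), zero_eq_neg] at h2
    exact one_ne_zero h2
  have hu : IsUnit (2 : ZMod p) := isUnit_iff_ne_zero.mpr h2ne
  set w : (ZMod p)ˣ := hu.unit with hw
  have hwval : (w : ZMod p) = 2 := hu.unit_spec
  have hordw : orderOf w = 2 ^ (s + 1) := by
    rw [← orderOf_units, hwval, horder2]
  have hAs : A ≤ s + 1 := by omega
  set u0 : (ZMod p)ˣ := w ^ (2 ^ (s + 1 - A)) with hu0
  have hordu0 : orderOf u0 = 2 ^ A := by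
    rw [hu0, orderOf_pow_of_dvd (pow_ne_zero _ two_ne_zero)
      (by rw [hordw]; exact pow_dvd_pow 2 (by omega)), hordw,
      Nat.pow_div (by omega) two_pos]
    congr 1
    omega
  -- p - 1 is divisible by 2^(s+1)
  have hcardunits : Fintype.card (ZMod p)ˣ = p - 1 := by
    rw [ZMod.card_units_eq_totient, Nat.totient_prime hp]
  have hdvdp1 : 2 ^ (s + 1) ∣ p - 1 := by
    rw [← hordw, ← hcardunits]
    exact orderOf_dvd_card
  have hple : 2 ^ (s + 1) ≤ p - 1 := Nat.le_of_dvd (by omega) hdvdp1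
  -- the complement
  set U := Subgroup.zpowers u0 with hU
  have hcardU : Nat.card U = 2 ^ A := by rw [hU, Nat.card_zpowers, hordu0]
  -- the kernel
  set K := Multiplicative (ZMod p) with hK
  haveI : Finite K := Finite.of_equiv (ZMod p) Multiplicative.ofAdd
  have hcardK : Nat.card K = p := by
    rw [hK, Nat.card_congr Multiplicative.ofAdd.symm, Nat.card_zmod]
  -- the action
  set act : (ZMod p)ˣ →* Multiplicative (AddAut (ZMod p)) := DistribMulAction.toAddAut _ _ with hact
  set φ : U →* MulAut K :=
    { toFun := fun cc => AddEquiv.toMultiplicative (Multiplicative.toAdd (act (cc : (ZMod p)ˣ)))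
      map_one' := by
        ext x
        show Multiplicative.ofAdd ((1 : (ZMod p)ˣ) • Multiplicative.toAdd x) = x
        rw [one_smul]
        rfl
      map_mul' := by
        intro cc dd
        ext x
        show Multiplicative.ofAdd (((cc : (ZMod p)ˣ) * (dd : (ZMod p)ˣ)) • Multiplicative.toAdd x) =
          Multiplicative.ofAdd ((cc : (ZMod p)ˣ) • ((dd : (ZMod p)ˣ) • Multiplicative.toAdd x))
        rw [mul_smul] } with hφ
  set F := SemidirectProduct K U φ with hF
  have hφval : ∀ (cc : U) (x : ZMod p),
      φ cc (Multiplicative.ofAdd x) =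
        Multiplicative.ofAdd (((cc : (ZMod p)ˣ) : ZMod p) * x) := by
    intro cc x
    rfl
  -- the equivalence with the product type
  set eF : F ≃ K × U :=
    { toFun := fun g => (g.left, g.right)
      invFun := fun x => ⟨x.1, x.2⟩
      left_inv := fun g => rfl
      right_inv := fun x => rfl } with heF
  haveI hFinF : Finite F := Finite.of_equiv _ eF.symm
  haveI : Fintype (ZMod p) := ZMod.fintype p
  haveI : Fintype K := Fintype.ofFinite K
  haveI : Fintype U := Fintype.ofFinite U
  haveI : Fintype F := Fintype.ofFinite F
  have hcardF : Nat.card F = 2 ^ A * p := by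
    rw [Nat.card_congr eF, Nat.card_prod, hcardK, hcardU]
    ring
  -- power formula
  have hpow : ∀ (x : ZMod p) (cc : U) (k : ℕ),
      (⟨Multiplicative.ofAdd x, cc⟩ : F) ^ k =
        ⟨Multiplicative.ofAdd ((∑ i ∈ Finset.range k, ((cc : (ZMod p)ˣ) : ZMod p) ^ i) * x),
          cc ^ k⟩ := by
    intro x cc k
    induction k with
    | zero =>
      apply SemidirectProduct.ext
      · simp
      · simp
    | succ k ih =>
      rw [pow_succ, ih, SemidirectProduct.mul_def]
      apply SemidirectProduct.ext
      · show Multiplicative.ofAdd _ * φ (cc ^ k) (Multiplicative.ofAdd x) = _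
        rw [hφval]
        rw [show (((cc ^ k : U) : (ZMod p)ˣ) : ZMod p) = (((cc : (ZMod p)ˣ) : ZMod p)) ^ k by
          push_cast
          rfl]
        rw [← ofAdd_add, Finset.sum_range_succ]
        congr 1
        ring
      · simp [pow_succ]
  -- order of mixed elements
  have horder : ∀ (x : ZMod p) (cc : U), cc ≠ 1 →
      orderOf (⟨Multiplicative.ofAdd x, cc⟩ : F) = orderOf cc := by
    intro x cc hcc
    set v : ZMod p := ((cc : (ZMod p)ˣ) : ZMod p) with hv
    have hvne : v ≠ 1 := by
      intro h
      apply hcc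
      have h1 : (cc : (ZMod p)ˣ) = 1 := Units.ext (by rw [← hv, h, Units.val_one])
      exact Subtype.ext h1
    have hvd : v ^ orderOf cc = 1 := by
      have h1 : ((cc ^ orderOf cc : U) : (ZMod p)ˣ) = 1 := by
        rw [pow_orderOf_eq_one cc]; rfl
      calc v ^ orderOf cc = (((cc ^ orderOf cc : U) : (ZMod p)ˣ) : ZMod p) := by push_cast; rfl
      _ = 1 := by rw [h1, Units.val_one]
    have hsum : (∑ i ∈ Finset.range (orderOf cc), v ^ i) = 0 := by
      have hgeom := geom_sum_mul v (orderOf cc)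
      rw [hvd, sub_self] at hgeom
      rcases mul_eq_zero.mp hgeom with h | h
      · exact h
      · exact absurd (by linear_combination h : v = 1) hvne
    have h1 : (⟨Multiplicative.ofAdd x, cc⟩ : F) ^ orderOf cc = 1 := by
      rw [hpow, hsum, zero_mul, pow_orderOf_eq_one cc]
      rfl
    refine Nat.dvd_antisymm (orderOf_dvd_of_pow_eq_one h1) ?_
    have h3 := orderOf_map_dvd (SemidirectProduct.rightHom (φ := φ))
      (⟨Multiplicative.ofAdd x, cc⟩ : F)
    simpa using h3
  -- sum of orders over F
  have hUcyc : IsCyclic U := inferInstance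
  have hUsum : ∑ cc : U, orderOf cc = W (2 ^ A) := by
    rw [sum_orderOf, Nat.card_eq_fintype_card.symm, hcardU]
  have hKsum : ∑ x : K, orderOf x = W p := by
    rw [sum_orderOf, Nat.card_eq_fintype_card.symm, hcardK]
  have hKcard : Fintype.card K = p := by rw [← Nat.card_eq_fintype_card, hcardK]
  have hSF : ∑ g : F, orderOf g = W p + p * (W (2 ^ A) - 1) := by
    rw [← Equiv.sum_comp eF.symm (fun g : F => orderOf g)]
    have hterm : ∀ y : K × U, orderOf (eF.symm y) = orderOf (⟨y.1, y.2⟩ : F) := fun y => rfl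
    rw [Fintype.sum_prod_type, Finset.sum_comm]
    rw [← Finset.add_sum_erase _ _ (Finset.mem_univ (1 : U))]
    have hrow1 : ∑ x : K, orderOf (eF.symm (x, 1)) = W p := by
      rw [← hKsum]
      refine Finset.sum_congr rfl fun x _ => ?_
      show orderOf (⟨x, (1:U)⟩ : F) = orderOf x
      have : (⟨x, (1:U)⟩ : F) = SemidirectProduct.inl x := rfl
      rw [this, orderOf_injective SemidirectProduct.inl SemidirectProduct.inl_injective]
    have hrow2 : ∀ cc ∈ Finset.univ.erase (1 : U),
        ∑ x : K, orderOf (eF.symm (x, cc)) = p * orderOf cc := by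
      intro cc hcc
      have hccne : cc ≠ 1 := (Finset.mem_erase.mp hcc).1
      have : ∀ x : K, orderOf (eF.symm (x, cc)) = orderOf cc := by
        intro x
        show orderOf (⟨x, cc⟩ : F) = orderOf cc
        have hx : (⟨x, cc⟩ : F) = ⟨Multiplicative.ofAdd (Multiplicative.toAdd x), cc⟩ := rfl
        rw [hx, horder _ _ hccne]
      rw [Finset.sum_congr rfl (fun x _ => this x), Finset.sum_const, Finset.card_univ, smul_eq_mul, hKcard]
    rw [hrow1, Finset.sum_congr rfl hrow2, ← Finset.mul_sum]
    have herase : ∑ cc ∈ Finset.univ.erase (1 : U), orderOf cc = W (2 ^ A) - 1 := by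
      have h0 : orderOf (1 : U) + ∑ cc ∈ Finset.univ.erase (1 : U), orderOf cc
          = ∑ cc : U, orderOf cc :=
        Finset.add_sum_erase Finset.univ (fun cc : U => orderOf cc) (Finset.mem_univ (1 : U))
      rw [hUsum, orderOf_one] at h0
      omega
    rw [herase]
  -- the subgroup R
  set R := (SemidirectProduct.inl : K →* F).range with hR
  have havgR : avgOrder R = (W p : ℝ) / p := by
    rw [← avgOrder_congr (MonoidHom.ofInjective SemidirectProduct.inl_injective),
      avgOrder_cyclic, hcardK]
  have hcardF' : Fintype.card F = 2 ^ A * p := by rw [← Nat.card_eq_fintype_card, hcardF]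
  have havgF : avgOrder F = ((W p + p * (W (2 ^ A) - 1) : ℕ) : ℝ) / ((2:ℝ) ^ A * p) := by
    rw [avgOrder_eq, hcardF', ← Nat.cast_sum _ _, hSF]
    push_cast
    ring_nf
  -- numeric part
  have hWppos : 0 < W p := by rw [W_prime hp]; omega
  -- numeric conclusions
  set P := (p:ℝ) with hP
  set Wp := ((W p : ℕ) : ℝ) with hWp
  set W2 := ((W (2 ^ A) : ℕ) : ℝ) with hW2
  set T := (2:ℝ) ^ A with hT
  have hPpos : (0:ℝ) < P := by rw [hP]; exact_mod_cast hp.pos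
  have hP2 : (2:ℝ) < P := by rw [hP]; exact_mod_cast hp2lt
  have hWpRpos : (0:ℝ) < Wp := by rw [hWp]; exact_mod_cast hWppos
  have hTpos : (0:ℝ) < T := by rw [hT]; positivity
  have hW2ge1R : (1:ℝ) ≤ W2 := by rw [hW2]; exact_mod_cast hW2ge1
  have hWpeq : Wp = 1 + P * (P - 1) := by
    rw [hWp, hP, W_prime hp]
    push_cast [Nat.cast_sub hp.one_le]
    ring
  have hcast : ((W p + p * (W (2 ^ A) - 1) : ℕ) : ℝ) = Wp + P * (W2 - 1) := by
    push_cast [Nat.cast_sub hW2ge1]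
    try ring
  have hPne : P ≠ 0 := by
    have : (0:ℝ) < P := by rw [hP]; exact_mod_cast hp.pos
    linarith
  have hTne : T ≠ 0 := by rw [hT]; positivity
  have hWpne : Wp ≠ 0 := by
    have : (0:ℝ) < Wp := by rw [hWp]; exact_mod_cast hWppos
    linarith
  have hr : avgOrder F / avgOrder R = (Wp + P * (W2 - 1)) / (T * Wp) := by
    rw [havgF, havgR, hcast]
    field_simp
  have hdiff : avgOrder F / avgOrder R - T⁻¹ = (P * (W2 - 1)) / (T * Wp) := by
    rw [hr]
    field_simp
    ring
  have hdiffnonneg : (0:ℝ) ≤ (P * (W2 - 1)) / (T * Wp) := by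
    apply div_nonneg
    · nlinarith
    · positivity
  have hT1 : (1:ℝ) ≤ T := by
    rw [hT]
    calc (1:ℝ) = 1 ^ A := (one_pow A).symm
    _ ≤ 2 ^ A := pow_le_pow_left₀ (by norm_num) one_le_two A
  have hWpge : P * (P - 1) ≤ Wp := by rw [hWpeq]; linarith
  have e2 : (P * (W2 - 1)) / (T * Wp) ≤ W2 / (P - 1) := by
    rw [div_le_div_iff₀ (by positivity) (by linarith)]
    have i1 : (W2 - 1) * (P * (P - 1)) ≤ W2 * Wp :=
      mul_le_mul (by linarith) hWpge (by nlinarith) (by linarith)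
    nlinarith [mul_le_mul_of_nonneg_left hT1 (show (0:ℝ) ≤ W2 * Wp by positivity)]
  have hpow_s : ((2:ℝ)) ^ (s + 1) ≤ P - 1 := by
    have := hple
    have h9 : ((2 ^ (s + 1) : ℕ) : ℝ) ≤ ((p - 1 : ℕ) : ℝ) := by exact_mod_cast this
    rw [Nat.cast_sub hp.one_le] at h9
    push_cast at h9
    rw [hP]
    exact h9
  have hks : (2:ℝ) ^ k ≤ (2:ℝ) ^ (s + 1) :=
    pow_le_pow_right₀ one_le_two (by omega : k ≤ s + 1)
  have e4 : W2 / (2:ℝ) ^ (s + 1) < min δ 2⁻¹ := by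
    have h10 : W2 / min δ 2⁻¹ < (2:ℝ) ^ (s + 1) :=
      lt_of_lt_of_le (lt_of_le_of_lt (le_max_right _ _) hk) hks
    have h11 : W2 < (2:ℝ) ^ (s + 1) * min δ 2⁻¹ := by
      have := (div_lt_iff₀ hmin).mp h10
      linarith
    rw [div_lt_iff₀ (by positivity)]
    linarith
  have e3 : W2 / (P - 1) ≤ W2 / (2:ℝ) ^ (s + 1) :=
    div_le_div_of_nonneg_left (by linarith) (by positivity) hpow_s
  have hdifflt : (P * (W2 - 1)) / (T * Wp) < min δ 2⁻¹ :=
    lt_of_le_of_lt (e2.trans e3) e4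
  have hcp : c < P := by
    have h12 : c < (2:ℝ) ^ k := lt_of_le_of_lt (le_max_left _ _) hk
    have : (2:ℝ) ^ k ≤ P - 1 := hks.trans hpow_s
    linarith
  have hTinv : T⁻¹ ≤ 2⁻¹ := by
    have hT2 : (2:ℝ) ≤ T := by
      rw [hT]
      calc (2:ℝ) = 2 ^ 1 := (pow_one 2).symm
      _ ≤ 2 ^ A := pow_le_pow_right₀ one_le_two hA
    exact inv_anti₀ (by norm_num) hT2
  refine ⟨F, inferInstance, hFinF, R, p, hp, hcp, hcardF, ?_, ?_, ?_⟩
  · have := hdiff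
    linarith [hdiffnonneg]
  · have h13 : avgOrder F / avgOrder R = T⁻¹ + (P * (W2 - 1)) / (T * Wp) := by
      linarith [hdiff]
    rw [h13]
    have : (P * (W2 - 1)) / (T * Wp) < 2⁻¹ := lt_of_lt_of_le hdifflt (min_le_right _ _)
    linarith
  · rw [hdiff, abs_of_nonneg hdiffnonneg]
    exact lt_of_lt_of_le hdifflt (min_le_left _ _)

end AvgDense

/-- The set of ratios `o(G)/o(H)`, with `G` a finite group and `H ≤ G`,
is dense in `[0, ∞)`. -/

theorem avgOrder_ratio_dense :
    ∀ a : ℝ, 0 ≤ a → ∀ ε : ℝ, 0 < ε →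
      ∃ (G : Type) (_ : Group G), Finite G ∧
        ∃ H : Subgroup G, |avgOrder G / avgOrder H - a| < ε := by
  intro a ha ε hε
  -- choose A
  obtain ⟨A', hA'⟩ := pow_unbounded_of_one_lt (4 / ε) (one_lt_two (α := ℝ))
  set A := A' + 1 with hA
  have hA1 : 1 ≤ A := by omega
  have hTA : (4:ℝ) / ε < 2 ^ A :=
    lt_of_lt_of_le hA' (pow_le_pow_right₀ one_le_two (by omega))
  have hTApos : (0:ℝ) < 2 ^ A := by positivity
  have h4 : (4:ℝ) < 2 ^ A * ε := by
    have := (div_lt_iff₀ hε).mp hTA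
    linarith
  have h2A : 2 / 2 ^ A < ε / 2 := by
    rw [div_lt_div_iff₀ hTApos (by norm_num)]
    linarith
  -- choose q
  set n0 := ⌊a * 2 ^ A⌋₊ with hn0
  set q := 2 * (n0 / 2) + 1 with hq
  have hq1 : 1 ≤ q := by omega
  have hfl1 : (n0 : ℝ) ≤ a * 2 ^ A := Nat.floor_le (by positivity)
  have hfl2 : a * 2 ^ A < n0 + 1 := Nat.lt_floor_add_one _
  have hc1 : (q:ℝ) ≤ (n0:ℝ) + 1 := by exact_mod_cast (by omega : q ≤ n0 + 1)
  have hc2 : (n0:ℝ) ≤ (q:ℝ) := by exact_mod_cast (by omega : n0 ≤ q)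
  have hqa' : |(q : ℝ) - a * 2 ^ A| ≤ 2 := by
    rw [abs_le]
    constructor <;> linarith
  have hqa : |(q : ℝ) / 2 ^ A - a| ≤ 2 / 2 ^ A := by
    have hid : (q:ℝ) / 2 ^ A - a = ((q:ℝ) - a * 2 ^ A) / 2 ^ A := by field_simp
    rw [hid, abs_div, abs_of_pos hTApos]
    gcongr
  -- the q-part
  have hεq : (0:ℝ) < min 1 (ε / 4) := lt_min one_pos (by positivity)
  obtain ⟨K, iK1, iK2, L, M, hdvd, hrq⟩ := AvgDense.lemQ q hq1 (min 1 (ε / 4)) hεq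
  -- the Frobenius part
  have hδpos : (0:ℝ) < ε / (8 * ((q:ℝ) + 1)) := by positivity
  obtain ⟨F, iF1, iF2, R, p, hp, hcp, hcardF, hlow, hup, hclose⟩ :=
    AvgDense.frob_exists A hA1 (q:ℝ) (ε / (8 * ((q:ℝ) + 1))) hδpos
  -- coprimality
  have hpq : ¬ p ∣ q := by
    intro hdvd'
    have : (p:ℝ) ≤ (q:ℝ) := by exact_mod_cast Nat.le_of_dvd hq1 hdvd'
    linarith
  have hq2 : Nat.Coprime q 2 := by
    have : q % 2 = 1 := by omega
    simpa [Nat.coprime_two_right, Nat.odd_iff] using this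
  have hqp : Nat.Coprime q p := ((Nat.Prime.coprime_iff_not_dvd hp).mpr hpq).symm
  have hqF : Nat.Coprime q (2 ^ A * p) := Nat.Coprime.mul_right (hq2.pow_right A) hqp
  have hcopKF : Nat.Coprime (Nat.card K) (Nat.card F) := by
    rw [hcardF]
    exact Nat.Coprime.coprime_dvd_left hdvd (hqF.pow_left M)
  have hcopLR : Nat.Coprime (Nat.card L) (Nat.card R) :=
    Nat.Coprime.coprime_dvd_left (Subgroup.card_subgroup_dvd_card L)
      (Nat.Coprime.coprime_dvd_right (Subgroup.card_subgroup_dvd_card R) hcopKF)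
  refine ⟨K × F, inferInstance, inferInstance, L.prod R, ?_⟩
  have hG : avgOrder (K × F) = avgOrder K * avgOrder F := AvgDense.avgOrder_prod _ _ hcopKF
  have hH : avgOrder (L.prod R) = avgOrder L * avgOrder R := by
    rw [AvgDense.avgOrder_congr (Subgroup.prodEquiv L R), AvgDense.avgOrder_prod _ _ hcopLR]
  rw [hG, hH, ← div_mul_div_comm]
  set rq := avgOrder K / avgOrder L with hrq'
  set rF := avgOrder F / avgOrder R with hrF'
  set T := (2:ℝ) ^ A with hT
  have hrFnonneg : 0 ≤ rF := le_trans (by positivity) hlow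
  have habs1 : |rF| ≤ 1 := by rw [abs_of_nonneg hrFnonneg]; exact hup
  have hid2 : rq * rF - (q:ℝ) * T⁻¹ = rF * (rq - q) + (q:ℝ) * (rF - T⁻¹) := by ring
  have ht1 : |rF * (rq - q)| ≤ ε / 4 := by
    rw [abs_mul]
    calc |rF| * |rq - (q:ℝ)| ≤ 1 * (min 1 (ε / 4)) :=
          mul_le_mul habs1 hrq.le (abs_nonneg _) (by norm_num)
    _ ≤ ε / 4 := by rw [one_mul]; exact min_le_right _ _
  have ht2 : (q:ℝ) * |rF - T⁻¹| < ε / 8 := by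
    have hD : (0:ℝ) < ε / (8 * ((q:ℝ) + 1)) := hδpos
    have hDe : (ε / (8 * ((q:ℝ) + 1))) * (8 * ((q:ℝ) + 1)) = ε :=
      div_mul_cancel₀ _ (by positivity)
    have hqpos : (0:ℝ) < (q:ℝ) := by exact_mod_cast hq1
    calc (q:ℝ) * |rF - T⁻¹| < (q:ℝ) * (ε / (8 * ((q:ℝ) + 1))) :=
          mul_lt_mul_of_pos_left hclose hqpos
    _ < ε / 8 := by nlinarith
  have hstep : |rq * rF - (q:ℝ) * T⁻¹| < ε / 4 + ε / 8 := by
    rw [hid2]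
    calc |rF * (rq - q) + (q:ℝ) * (rF - T⁻¹)|
        ≤ |rF * (rq - q)| + |(q:ℝ) * (rF - T⁻¹)| := abs_add_le _ _
    _ = |rF * (rq - q)| + (q:ℝ) * |rF - T⁻¹| := by
        rw [abs_mul ((q:ℝ)) (rF - T⁻¹), abs_of_nonneg (show (0:ℝ) ≤ (q:ℝ) by positivity)]
    _ < ε / 4 + ε / 8 := by linarith
  have hqT : (q:ℝ) * T⁻¹ = (q:ℝ) / T := by ring
  rw [hqT] at hstep
  calc |rq * rF - a| ≤ |rq * rF - (q:ℝ) / T| + |(q:ℝ) / T - a| := abs_sub_le _ _ _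
  _ < ε := by linarith [hstep, hqa, h2A]
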